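/- For s ≥ 2, let Q_s be the graph built from three disjoint independent sets A, B, C each of size s, with chosen vertices a ∈ A, b ∈ B, c ∈ C, where a is complete to B∪C, b is complete to A∪C, and c is complete to A∪B (and there are no other edges). Then Q_s is 3-colourable, oct(Q_s) = 2, and every independent odd cycle transversal of Q_s has size at least s. -/
import Mathlib


open SimpleGraph

/-- `S` is an independent set of `G`. -/
def IsIS {V : Type*} (G : SimpleGraph V) (S : Set V) : Prop :=
  S.Pairwise fun u v => ¬ G.Adj u v

/-- `G` contains no induced subgraph isomorphic to `H`. -/
def HFree {W V : Type*} (H : SimpleGraph W) (G : SimpleGraph V) : Prop :=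
  IsEmpty (H ↪g G)

/-- `G` is bipartite: the vertex set splits into two independent sets. -/
def IsBip {V : Type*} (G : SimpleGraph V) : Prop :=
  ∃ X : Set V, IsIS G X ∧ IsIS G Xᶜ

/-- `S` is a vertex cover of `G`. -/
def IsVC {V : Type*} (G : SimpleGraph V) (S : Finset V) : Prop :=
  ∀ ⦃u v⦄, G.Adj u v → u ∈ S ∨ v ∈ S

/-- minimum size of a vertex cover. -/
noncomputable def vc {V : Type*} (G : SimpleGraph V) : ℕ :=
  sInf {n | ∃ S : Finset V, IsVC G S ∧ S.card = n}

/-- minimum size of an independent vertex cover. -/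
noncomputable def ivc {V : Type*} (G : SimpleGraph V) : ℕ :=
  sInf {n | ∃ S : Finset V, IsVC G S ∧ IsIS G ↑S ∧ S.card = n}

/-- `S` is an odd cycle transversal of `G`: removing it leaves a bipartite graph. -/
def IsOCT {V : Type*} (G : SimpleGraph V) (S : Finset V) : Prop :=
  (G.induce ((S : Set V)ᶜ)).Colorable 2

/-- minimum size of an odd cycle transversal. -/
noncomputable def oct {V : Type*} (G : SimpleGraph V) : ℕ :=
  sInf {n | ∃ S : Finset V, IsOCT G S ∧ S.card = n}

/-- minimum size of an independent odd cycle transversal. -/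
noncomputable def ioct {V : Type*} (G : SimpleGraph V) : ℕ :=
  sInf {n | ∃ S : Finset V, IsOCT G S ∧ IsIS G ↑S ∧ S.card = n}

/-- The graph `Q_s`: three independent sets `A = {0} × Fin s`, `B = {1} × Fin s`,
`C = {2} × Fin s` with chosen vertices `a = (0,0)`, `b = (1,0)`, `c = (2,0)`,
where each chosen vertex is complete to the union of the other two sets,
and there are no other edges. -/
def Qgraph (s : ℕ) : SimpleGraph (Fin 3 × Fin s) :=
  SimpleGraph.fromRel fun u v => u.1 ≠ v.1 ∧ ((u.2 : ℕ) = 0 ∨ (v.2 : ℕ) = 0)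


lemma Qadj_iff {s : ℕ} {u v : Fin 3 × Fin s} :
    (Qgraph s).Adj u v ↔ u.1 ≠ v.1 ∧ ((u.2 : ℕ) = 0 ∨ (v.2 : ℕ) = 0) := by
  simp only [Qgraph, fromRel_adj]
  constructor
  · rintro ⟨_, ⟨h1, h2⟩ | ⟨h1, h2⟩⟩
    · exact ⟨h1, h2⟩
    · exact ⟨h1.symm, h2.symm⟩
  · rintro ⟨h1, h2⟩
    exact ⟨fun h => h1 (congrArg Prod.fst h), Or.inl ⟨h1, h2⟩⟩

lemma fin3_eq_two {t : Fin 3} (h0 : t ≠ 0) (h1 : t ≠ 1) : t = 2 := by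
  fin_cases t <;> simp_all

lemma tri_hit {s : ℕ} {S : Finset (Fin 3 × Fin s)} (h : IsOCT (Qgraph s) S)
    {x y z : Fin 3 × Fin s} (hxy : (Qgraph s).Adj x y) (hyz : (Qgraph s).Adj y z)
    (hxz : (Qgraph s).Adj x z) : x ∈ S ∨ y ∈ S ∨ z ∈ S := by
  by_contra hc
  push_neg at hc
  obtain ⟨hx, hy, hz⟩ := hc
  obtain ⟨C⟩ := h
  have hx' : x ∈ ((S : Set (Fin 3 × Fin s))ᶜ) := by simpa using hx
  have hy' : y ∈ ((S : Set (Fin 3 × Fin s))ᶜ) := by simpa using hy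
  have hz' : z ∈ ((S : Set (Fin 3 × Fin s))ᶜ) := by simpa using hz
  have a1 := C.valid (show ((Qgraph s).induce _).Adj ⟨x, hx'⟩ ⟨y, hy'⟩ from hxy)
  have a2 := C.valid (show ((Qgraph s).induce _).Adj ⟨y, hy'⟩ ⟨z, hz'⟩ from hyz)
  have a3 := C.valid (show ((Qgraph s).induce _).Adj ⟨x, hx'⟩ ⟨z, hz'⟩ from hxz)
  rw [Ne, Fin.ext_iff] at a1 a2 a3
  have b1 := (C ⟨x, hx'⟩).isLt
  have b2 := (C ⟨y, hy'⟩).isLt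
  have b3 := (C ⟨z, hz'⟩).isLt
  omega

lemma key_lemma {s : ℕ} (hs : 2 ≤ s) {S : Finset (Fin 3 × Fin s)}
    (hoct : IsOCT (Qgraph s) S) (hIS : IsIS (Qgraph s) ↑S)
    {j j' j'' : Fin 3} (h1 : j ≠ j') (h2 : j ≠ j'') (h3 : j' ≠ j'')
    (hj : (j, (⟨0, by omega⟩ : Fin s)) ∈ S) : s ≤ S.card := by
  have hz : 0 < s := by omega
  set z0 : Fin s := ⟨0, hz⟩ with hz0
  have hnotmem : ∀ k : Fin 3, j ≠ k → (k, z0) ∉ S := by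
    intro k hk hmem
    have hadj : (Qgraph s).Adj (j, z0) (k, z0) := Qadj_iff.mpr ⟨hk, Or.inl rfl⟩
    exact hIS (Finset.mem_coe.mpr hj) (Finset.mem_coe.mpr hmem)
      (fun h => hk (congrArg Prod.fst h)) hadj
  have hall : ∀ i : Fin s, (j, i) ∈ S := by
    intro i
    have t1 : (Qgraph s).Adj (j, i) (j', z0) :=
      Qadj_iff.mpr ⟨h1, Or.inr rfl⟩
    have t2 : (Qgraph s).Adj (j', z0) (j'', z0) :=
      Qadj_iff.mpr ⟨h3, Or.inl rfl⟩
    have t3 : (Qgraph s).Adj (j, i) (j'', z0) :=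
      Qadj_iff.mpr ⟨h2, Or.inr rfl⟩
    rcases tri_hit hoct t1 t2 t3 with h | h | h
    · exact h
    · exact absurd h (hnotmem j' h1)
    · exact absurd h (hnotmem j'' h2)
  have hinj : Function.Injective (fun i : Fin s => (j, i)) :=
    fun a b h => congrArg Prod.snd h
  have hsub : Finset.univ.image (fun i : Fin s => (j, i)) ⊆ S := by
    intro x hx
    simp only [Finset.mem_image, Finset.mem_univ, true_and] at hx
    obtain ⟨i, rfl⟩ := hx
    exact hall i
  calc s = (Finset.univ.image (fun i : Fin s => (j, i))).card := by
        rw [Finset.card_image_of_injective _ hinj, Finset.card_univ, Fintype.card_fin]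
    _ ≤ S.card := Finset.card_le_card hsub


theorem stmt_17 (s : ℕ) (hs : 2 ≤ s) :
    (Qgraph s).Colorable 3 ∧ oct (Qgraph s) = 2 ∧
      ∀ S : Finset (Fin 3 × Fin s),
        IsOCT (Qgraph s) S → IsIS (Qgraph s) ↑S → s ≤ S.card := by

  have hz : 0 < s := by omega
  set z0 : Fin s := ⟨0, hz⟩ with hz0
  have f01 : (0 : Fin 3) ≠ 1 := by decide
  have f02 : (0 : Fin 3) ≠ 2 := by decide
  have f12 : (1 : Fin 3) ≠ 2 := by decide
  have f10 : (1 : Fin 3) ≠ 0 := by decide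
  have f20 : (2 : Fin 3) ≠ 0 := by decide
  have f21 : (2 : Fin 3) ≠ 1 := by decide
  -- triangle a b c adjacencies
  have hab : (Qgraph s).Adj (0, z0) (1, z0) := Qadj_iff.mpr ⟨f01, Or.inl rfl⟩
  have hbc : (Qgraph s).Adj (1, z0) (2, z0) := Qadj_iff.mpr ⟨f12, Or.inl rfl⟩
  have hac : (Qgraph s).Adj (0, z0) (2, z0) := Qadj_iff.mpr ⟨f02, Or.inl rfl⟩
  -- the OCT {a, b}
  set S₂ : Finset (Fin 3 × Fin s) := {(0, z0), (1, z0)} with hS₂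
  have hne01 : ((0 : Fin 3), z0) ≠ ((1 : Fin 3), z0) := by
    intro h; exact absurd (congrArg Prod.fst h) f01
  have hcard₂ : S₂.card = 2 := Finset.card_pair hne01
  have hOCT₂ : IsOCT (Qgraph s) S₂ := by
    refine ⟨SimpleGraph.Coloring.mk
      (fun v => if (v : Fin 3 × Fin s).1 = 2 then 0 else 1) ?_⟩
    rintro ⟨u, hu⟩ ⟨v, hv⟩ hadj
    have hu' : u ∉ S₂ := by simpa using hu
    have hv' : v ∉ S₂ := by simpa using hv
    simp only [hS₂, Finset.mem_insert, Finset.mem_singleton, not_or] at hu' hv'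
    obtain ⟨hne, hzero⟩ := Qadj_iff.mp (hadj : (Qgraph s).Adj u v)
    have key : ∀ w : Fin 3 × Fin s, (w.2 : ℕ) = 0 → w ≠ (0, z0) → w ≠ (1, z0) →
        w.1 = 2 := by
      intro w hw hw0 hw1
      have hwz : w.2 = z0 := Fin.ext hw
      have hw' : w = (w.1, z0) := by rw [← hwz]
      apply fin3_eq_two
      · intro h; exact hw0 (by rw [hw', h])
      · intro h; exact hw1 (by rw [hw', h])
    rcases hzero with h0 | h0
    · have hu2 : u.1 = 2 := key u h0 hu'.1 hu'.2
      have hv2 : v.1 ≠ 2 := by rw [← hu2]; exact fun h => hne h.symm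
      simp [hu2, hv2]
    · have hv2 : v.1 = 2 := key v h0 hv'.1 hv'.2
      have hu2 : u.1 ≠ 2 := by rw [← hv2]; exact hne
      simp [hu2, hv2]
  have hmem2 : 2 ∈ {n | ∃ S : Finset (Fin 3 × Fin s), IsOCT (Qgraph s) S ∧ S.card = n} :=
    ⟨S₂, hOCT₂, hcard₂⟩
  refine ⟨⟨SimpleGraph.Coloring.mk Prod.fst fun h => (Qadj_iff.mp h).1⟩, ?_, ?_⟩
  · refine le_antisymm (Nat.sInf_le hmem2) (le_csInf ⟨2, hmem2⟩ ?_)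
    rintro n ⟨S, hS, rfl⟩
    by_contra hn
    push_neg at hn
    have hle1 : S.card ≤ 1 := by omega
    have honly : ∀ x ∈ S, ∀ y ∈ S, x = y := Finset.card_le_one.mp hle1
    set z1 : Fin s := ⟨1, by omega⟩ with hz1
    have hzne : z1 ≠ z0 := by
      intro h; exact absurd (congrArg Fin.val h) (by simp [hz0, hz1])
    -- which of a, b, c is in S
    rcases tri_hit hS hab hbc hac with h | h | h
    · -- S = {(0,z0)}; triangle (0,z1), (1,z0), (2,z0)
      have t1 : (Qgraph s).Adj (0, z1) (1, z0) := Qadj_iff.mpr ⟨f01, Or.inr rfl⟩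
      have t3 : (Qgraph s).Adj (0, z1) (2, z0) := Qadj_iff.mpr ⟨f02, Or.inr rfl⟩
      rcases tri_hit hS t1 hbc t3 with h' | h' | h'
      · have := honly _ h' _ h
        exact hzne (congrArg Prod.snd this)
      · have := honly _ h' _ h
        exact absurd (congrArg Prod.fst this) f10
      · have := honly _ h' _ h
        exact absurd (congrArg Prod.fst this) f20
    · -- S = {(1,z0)}; triangle (0,z0), (1,z1), (2,z0)
      have t1 : (Qgraph s).Adj (0, z0) (1, z1) := Qadj_iff.mpr ⟨f01, Or.inl rfl⟩
      have t2 : (Qgraph s).Adj (1, z1) (2, z0) := Qadj_iff.mpr ⟨f12, Or.inr rfl⟩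
      rcases tri_hit hS t1 t2 hac with h' | h' | h'
      · have := honly _ h' _ h
        exact absurd (congrArg Prod.fst this) f01
      · have := honly _ h' _ h
        exact hzne (congrArg Prod.snd this)
      · have := honly _ h' _ h
        exact absurd (congrArg Prod.fst this) f21
    · -- S = {(2,z0)}; triangle (0,z0), (1,z0), (2,z1)
      have t2 : (Qgraph s).Adj (1, z0) (2, z1) := Qadj_iff.mpr ⟨f12, Or.inl rfl⟩
      have t3 : (Qgraph s).Adj (0, z0) (2, z1) := Qadj_iff.mpr ⟨f02, Or.inl rfl⟩
      rcases tri_hit hS hab t2 t3 with h' | h' | h'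
      · have := honly _ h' _ h
        exact absurd (congrArg Prod.fst this) f02
      · have := honly _ h' _ h
        exact absurd (congrArg Prod.fst this) f12
      · have := honly _ h' _ h
        exact hzne (congrArg Prod.snd this)
  · intro S hoct his
    rcases tri_hit hoct hab hbc hac with h | h | h
    · exact key_lemma hs hoct his (j := 0) (j' := 1) (j'' := 2)
        (by decide) (by decide) (by decide) h
    · exact key_lemma hs hoct his (j := 1) (j' := 0) (j'' := 2)
        (by decide) (by decide) (by decide) h
    · exact key_lemma hs hoct his (j := 2) (j' := 0) (j'' := 1)
        (by decide) (by decide) (by decide) h
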